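/- Let m be a positive integer with prime factorization m = p_1^{α_1} p_2^{α_2} ⋯ p_r^{α_r}, where p_1, …, p_r are r ≥ 2 distinct primes. Then there exists a constant c > 0 (depending only on m) such that for every n ≥ 1 there is a multilinear polynomial P' with integer coefficients in n variables, of total degree at most c · n^{1/r}, satisfying: (i) P'(0, …, 0) ≡ 0 (mod m); (ii) P'(x) ≢ 0 (mod m) for every x ∈ {0,1}^n with x ≠ (0, …, 0); and (iii) for every x ∈ {0,1}^n and every i ∈ {1, …, r}, either P'(x) ≡ 0 (mod p_i^{α_i}) or P'(x) ≡ 1 (mod p_i^{α_i}). -/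

import Mathlib

/-- A multilinear polynomial: every variable occurs to degree at most 1 in every monomial. -/
def IsMultilinear {n : ℕ} (P : MvPolynomial (Fin n) ℤ) : Prop :=
  ∀ d ∈ P.support, ∀ i, d i ≤ 1

open MvPolynomial Finset

namespace BBRaux

noncomputable def squash {n : ℕ} (d : Fin n →₀ ℕ) : Fin n →₀ ℕ :=
  Finsupp.mapRange (fun e => min e 1) (by simp) d

noncomputable def mlin {n : ℕ} (P : MvPolynomial (Fin n) ℤ) : MvPolynomial (Fin n) ℤ :=
  ∑ d ∈ P.support, monomial (squash d) (MvPolynomial.coeff d P)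

lemma squash_apply {n : ℕ} (d : Fin n →₀ ℕ) (i : Fin n) : squash d i = min (d i) 1 := rfl

lemma mlin_isMultilinear {n : ℕ} (P : MvPolynomial (Fin n) ℤ) : IsMultilinear (mlin P) := by
  intro d hd i
  rw [MvPolynomial.mem_support_iff, mlin, MvPolynomial.coeff_sum] at hd
  obtain ⟨e, _, hne⟩ := Finset.exists_ne_zero_of_sum_ne_zero hd
  rw [MvPolynomial.coeff_monomial] at hne
  split_ifs at hne with h
  · rw [← h, squash_apply]; exact min_le_right _ _
  · exact absurd rfl hne

lemma mlin_totalDegree_le {n : ℕ} (P : MvPolynomial (Fin n) ℤ) :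
    (mlin P).totalDegree ≤ P.totalDegree := by
  refine (totalDegree_finset_sum _ _).trans (Finset.sup_le fun d hd => ?_)
  refine (totalDegree_monomial_le _ _).trans ?_
  refine le_trans ?_ (le_totalDegree hd)
  rw [Finsupp.sum_fintype _ _ (fun i => rfl), Finsupp.sum_fintype _ _ (fun i => rfl)]
  exact Finset.sum_le_sum fun i _ => min_le_left _ _

lemma eval_mlin {n : ℕ} (x : Fin n → ℤ) (hx : ∀ i, x i = 0 ∨ x i = 1)
    (P : MvPolynomial (Fin n) ℤ) : eval x (mlin P) = eval x P := by
  conv_rhs => rw [P.as_sum]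
  rw [mlin, map_sum, map_sum]
  refine Finset.sum_congr rfl fun d _ => ?_
  rw [eval_monomial, eval_monomial]
  congr 1
  rw [Finsupp.prod_fintype _ _ (fun i => pow_zero _),
    Finsupp.prod_fintype _ _ (fun i => pow_zero _)]
  refine Finset.prod_congr rfl fun i _ => ?_
  rw [squash_apply]
  rcases Nat.eq_zero_or_pos (d i) with h2 | h2
  · simp [h2]
  · rw [min_eq_right h2]
    rcases hx i with h | h
    · simp [h, zero_pow, h2.ne']
    · simp [h]

lemma eval_esymm_01 {n : ℕ} (x : Fin n → ℤ) (hx : ∀ i, x i = 0 ∨ x i = 1) (s : ℕ) :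
    eval x (esymm (Fin n) ℤ s) = ((univ.filter fun i => x i = 1).card.choose s : ℤ) := by
  classical
  rw [esymm, map_sum]
  have key : ∀ t : Finset (Fin n), (eval x) (∏ i ∈ t, (X i : MvPolynomial (Fin n) ℤ)) =
      if t ⊆ univ.filter (fun i => x i = 1) then 1 else 0 := by
    intro t
    rw [map_prod]
    simp only [eval_X]
    split_ifs with h
    · exact Finset.prod_eq_one fun i hi => (Finset.mem_filter.mp (h hi)).2
    · rw [Finset.subset_iff] at h
      push_neg at h
      obtain ⟨i, hit, hiA⟩ := h
      refine Finset.prod_eq_zero hit ?_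
      rcases hx i with h0 | h1
      · exact h0
      · exact absurd (Finset.mem_filter.mpr ⟨Finset.mem_univ i, h1⟩) hiA
  rw [Finset.sum_congr rfl fun t _ => key t, Finset.sum_boole]
  rw [Nat.cast_inj]
  rw [← Finset.card_powersetCard s (univ.filter fun i => x i = 1)]
  congr 1
  ext t
  simp only [Finset.mem_filter, Finset.mem_powersetCard, Finset.subset_univ, true_and]
  tauto

lemma totalDegree_esymm_le (n s : ℕ) : (esymm (Fin n) ℤ s).totalDegree ≤ s := by
  rw [esymm]
  refine (totalDegree_finset_sum _ _).trans (Finset.sup_le fun t ht => ?_)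
  refine (totalDegree_finset_prod _ _).trans ?_
  have hc := (Finset.mem_powersetCard.mp ht).2
  calc ∑ i ∈ t, (X i : MvPolynomial (Fin n) ℤ).totalDegree ≤ ∑ i ∈ t, 1 :=
        Finset.sum_le_sum fun i _ => le_of_eq (totalDegree_X i)
    _ = t.card := by simp
    _ = s := hc

lemma geom_le (pp : ℕ) (hpp : 1 ≤ pp) (s : ℕ) :
    (∑ j ∈ Finset.range s, (pp - 1) * pp ^ j) ≤ pp ^ s := by
  induction s with
  | zero => simp
  | succ s ih =>
    rw [Finset.sum_range_succ, pow_succ]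
    calc (∑ j ∈ Finset.range s, (pp - 1) * pp ^ j) + (pp - 1) * pp ^ s
        ≤ pp ^ s + (pp - 1) * pp ^ s := Nat.add_le_add_right ih _
      _ = (1 + (pp - 1)) * pp ^ s := by ring
      _ = pp ^ s * pp := by rw [show 1 + (pp - 1) = pp from by omega, mul_comm]

lemma euler_one (p a : ℕ) (hp : p.Prime) (ha : 1 ≤ a) (w : ℤ) (hw : ¬ (p:ℤ) ∣ w) :
    ((p:ℤ)^a) ∣ w ^ (p^a).totient - 1 := by
  have hq : 0 < (p ^ a : ℕ) := pow_pos hp.pos a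
  have hQz : (((p^a : ℕ)):ℤ) = (p:ℤ)^a := by push_cast; ring
  have hmod : (0:ℤ) ≤ w % (p^a : ℕ) := Int.emod_nonneg w (by exact_mod_cast hq.ne')
  set b : ℕ := (w % (p^a : ℕ)).toNat with hb
  have hbw : (((p^a:ℕ)):ℤ) ∣ w - b := by
    rw [hb, Int.toNat_of_nonneg hmod, Int.emod_def]
    ring_nf
    exact Dvd.intro _ rfl
  have hpb : ¬ p ∣ b := by
    intro hdvd
    apply hw
    have h1 : (p:ℤ) ∣ (b:ℤ) := Int.natCast_dvd_natCast.mpr hdvd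
    have h2 : (p:ℤ) ∣ (((p^a:ℕ)):ℤ) := by rw [hQz]; exact dvd_pow_self _ (by omega)
    have h3 := dvd_add (h2.trans hbw) h1
    simpa using h3
  have hcop : Nat.Coprime b (p^a) :=
    Nat.Coprime.pow_right a (Nat.coprime_comm.mp ((Nat.Prime.coprime_iff_not_dvd hp).mpr hpb))
  have heuler := Nat.ModEq.pow_totient hcop
  have h1 : (((p^a:ℕ)):ℤ) ∣ (b:ℤ) ^ (p^a).totient - 1 := by
    have h := (Nat.modEq_iff_dvd).mp heuler
    push_cast at h ⊢
    exact (dvd_sub_comm).mp h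
  have h2 : (((p^a:ℕ)):ℤ) ∣ w ^ (p^a).totient - (b:ℤ) ^ (p^a).totient :=
    dvd_trans hbw (sub_dvd_pow_sub_pow w (b:ℤ) _)
  have h3 := dvd_add h2 h1
  rw [sub_add_sub_cancel] at h3
  rwa [hQz] at h3

lemma euler_or (p a : ℕ) (hp : p.Prime) (ha : 1 ≤ a) (w : ℤ) :
    ((p:ℤ)^a ∣ w ^ (p^a).totient) ∨ ((p:ℤ)^a ∣ w ^ (p^a).totient - 1) := by
  by_cases hw : (p:ℤ) ∣ w
  · left
    have hφ : a ≤ (p^a).totient := by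
      rw [Nat.totient_prime_pow hp (by omega)]
      have h1 : a ≤ 2 ^ (a-1) := by have := Nat.lt_two_pow_self (n := a-1); omega
      calc a ≤ 2^(a-1) := h1
        _ ≤ p^(a-1) := Nat.pow_le_pow_left hp.two_le _
        _ ≤ p^(a-1) * (p-1) := Nat.le_mul_of_pos_right _ (by have := hp.two_le; omega)
    exact dvd_trans (pow_dvd_pow_of_dvd hw a) (pow_dvd_pow w hφ)
  · right; exact euler_one p a hp ha w hw

lemma choose_pow_not_dvd (p : ℕ) (hp : p.Prime) (u : ℕ) (hu : ¬ p ∣ u) :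
    ∀ j : ℕ, ¬ p ∣ (p ^ j * u).choose (p ^ j) := by
  haveI : Fact p.Prime := ⟨hp⟩
  intro j
  induction j with
  | zero => simpa using hu
  | succ j ih =>
    have hmod := @Choose.choose_modEq_choose_mod_mul_choose_div_nat (p^(j+1)*u) (p^(j+1)) p ⟨hp⟩
    have hp0 : 0 < p := hp.pos
    have he1 : p^(j+1)*u = p * (p^j * u) := by ring
    have he2 : p^(j+1) = p * p^j := by ring
    rw [he1, he2, Nat.mul_mod_right, Nat.mul_mod_right,
      Nat.mul_div_cancel_left _ hp0, Nat.mul_div_cancel_left _ hp0,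
      Nat.choose_self, one_mul] at hmod
    intro hdvd
    apply ih
    rw [← he1, ← he2] at hmod
    unfold Nat.ModEq at hmod
    rw [Nat.dvd_iff_mod_eq_zero] at hdvd ⊢
    rw [← hmod]
    exact hdvd

end BBRaux

open BBRaux

/-- If `m` has `r ≥ 2` distinct prime factors, then for every `n ≥ 1` there is an explicit
multilinear integer polynomial `P'` of degree `O(n^{1/r})` with `P'(0,…,0) ≡ 0 (mod m)`,
`P'(x) ≢ 0 (mod m)` for every other 0-1 vector `x`, and such that at every 0-1 vector `x`
and every `i`, `P'(x) ≡ 0` or `1 (mod p_i^{α_i})`. -/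
theorem or_strong_representation_composite
    (m r : ℕ) (p α : Fin r → ℕ)
    (hr : 2 ≤ r)
    (hp : ∀ i, (p i).Prime)
    (hinj : Function.Injective p)
    (hα : ∀ i, 1 ≤ α i)
    (hm : m = ∏ i, p i ^ α i) :
    ∃ c : ℝ, 0 < c ∧
      ∀ n : ℕ, 1 ≤ n →
        ∃ P' : MvPolynomial (Fin n) ℤ,
          IsMultilinear P' ∧
          (P'.totalDegree : ℝ) ≤ c * (n : ℝ) ^ ((1 : ℝ) / r) ∧
          ((m : ℤ) ∣ MvPolynomial.eval (0 : Fin n → ℤ) P') ∧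
          (∀ x : Fin n → ℤ, (∀ i, x i = 0 ∨ x i = 1) → x ≠ 0 →
            ¬ ((m : ℤ) ∣ MvPolynomial.eval x P')) ∧
          (∀ x : Fin n → ℤ, (∀ i, x i = 0 ∨ x i = 1) → ∀ i : Fin r,
            ((p i : ℤ) ^ (α i) ∣ MvPolynomial.eval x P') ∨
            ((p i : ℤ) ^ (α i) ∣ (MvPolynomial.eval x P' - 1))) := by
  classical
  have hr0 : 0 < r := by omega
  have hrR : (0:ℝ) < r := by exact_mod_cast hr0
  have hcop : ∀ (i j : Fin r), i ≠ j → ∀ a b : ℕ, Nat.Coprime (p i ^ a) (p j ^ b) := by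
    intro i j hij a b
    exact Nat.Coprime.pow _ _ ((Nat.coprime_primes (hp i) (hp j)).mpr fun h => hij (hinj h))
  have hcrt : ∀ i : Fin r, ∃ u : ℤ, ((p i:ℤ)^(α i) ∣ u - 1) ∧
      ∀ j, j ≠ i → ((p j:ℤ)^(α j) ∣ u) := by
    intro i
    have hQcop : IsCoprime (∏ j ∈ univ.erase i, ((p j:ℤ)^(α j))) ((p i:ℤ)^(α i)) := by
      refine IsCoprime.prod_left fun j hj => ?_
      have h1 : Nat.Coprime (p j ^ α j) (p i ^ α i) :=
        hcop j i (Finset.ne_of_mem_erase hj) _ _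
      have h2 := Nat.isCoprime_iff_coprime.mpr h1
      push_cast at h2
      exact h2
    obtain ⟨a, b, hab⟩ := hQcop
    refine ⟨a * ∏ j ∈ univ.erase i, ((p j:ℤ)^(α j)), ?_, ?_⟩
    · have he : a * (∏ j ∈ univ.erase i, ((p j:ℤ)^(α j))) - 1 = -(b * ((p i:ℤ)^(α i))) := by
        linear_combination hab
      rw [he]
      exact dvd_neg.mpr (Dvd.intro_left b rfl)
    · intro j hj
      exact Dvd.dvd.mul_left
        (Finset.dvd_prod_of_mem _ (Finset.mem_erase.mpr ⟨hj, mem_univ _⟩)) a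
  choose u hu1 hu0 using hcrt
  refine ⟨∑ i, ((p i ^ α i).totient * p i : ℝ), ?_, ?_⟩
  · refine Finset.sum_pos (fun i _ => ?_) ⟨⟨0, hr0⟩, mem_univ _⟩
    have h1 : 0 < (p i ^ α i).totient := Nat.totient_pos.mpr (pow_pos (hp i).pos _)
    have h2 := (hp i).pos
    positivity
  intro n hn
  have ht_ex : ∀ i : Fin r, ∃ s : ℕ, n < (p i ^ (s+1))^r := by
    intro i
    refine ⟨n, ?_⟩
    calc n < 2^(n+1) := by have := Nat.lt_two_pow_self (n := n); omega
      _ ≤ p i ^ (n+1) := Nat.pow_le_pow_left (hp i).two_le _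
      _ ≤ (p i ^ (n+1))^r := Nat.le_self_pow (by omega) _
  set t : Fin r → ℕ := fun i => Nat.find (ht_ex i) with ht
  have htn : ∀ i, n < (p i ^ (t i + 1))^r := fun i => Nat.find_spec (ht_ex i)
  have htmin : ∀ i, t i ≠ 0 → (p i ^ (t i))^r ≤ n := by
    intro i h
    have h1 := Nat.find_min (ht_ex i) (show t i - 1 < t i by omega)
    have h2 : t i - 1 + 1 = t i := by omega
    rw [h2] at h1
    omega
  have hprodgt : n < ∏ i, p i ^ (t i + 1) := by
    have h1 : (n+1)^r ≤ (∏ i, p i ^ (t i + 1))^r := by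
      rw [← Finset.prod_pow]
      calc (n+1)^r = ∏ _i : Fin r, (n+1) := by
            rw [Finset.prod_const, Finset.card_univ, Fintype.card_fin]
        _ ≤ ∏ i, (p i ^ (t i + 1))^r :=
            Finset.prod_le_prod (fun _ _ => by omega) (fun i _ => htn i)
    have h2 := (Nat.pow_le_pow_iff_left (show r ≠ 0 by omega)).mp h1
    omega
  set M : Fin r → MvPolynomial (Fin n) ℤ := fun i =>
    1 - ∏ j ∈ Finset.range (t i + 1),
      (1 - (esymm (Fin n) ℤ (p i ^ j)) ^ (p i - 1)) with hM
  set P : MvPolynomial (Fin n) ℤ := ∑ i, MvPolynomial.C (u i) * M i ^ (p i ^ α i).totient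
    with hP
  set k : (Fin n → ℤ) → ℕ := fun x => (univ.filter fun a => x a = 1).card with hk
  set v : Fin r → ℕ → ℤ := fun i c =>
    1 - ∏ j ∈ Finset.range (t i + 1), (1 - ((c.choose (p i ^ j) : ℤ)) ^ (p i - 1)) with hv
  set W : Fin r → ℕ → ℤ := fun i c => (v i c) ^ (p i ^ α i).totient with hW
  have heval : ∀ x : Fin n → ℤ, (∀ a, x a = 0 ∨ x a = 1) →
      MvPolynomial.eval x P = ∑ i, u i * W i (k x) := by
    intro x hx
    rw [hP, map_sum]
    refine Finset.sum_congr rfl fun i _ => ?_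
    rw [map_mul, eval_C]
    congr 1
    rw [map_pow]
    congr 1
    simp only [hM, hW, hv, hk, map_sub, map_one, map_prod, map_pow,
      eval_esymm_01 x hx]
  have key_mod : ∀ (i : Fin r) (c : ℕ),
      ((p i:ℤ)^(α i)) ∣ (∑ j, u j * W j c) - W i c := by
    intro i c
    have h1 : (∑ j, u j * W j c) - W i c
        = ∑ j, (u j * W j c - if j = i then W i c else 0) := by
      rw [Finset.sum_sub_distrib, Finset.sum_ite_eq' univ i (fun _ => W i c)]
      simp
    rw [h1]
    refine Finset.dvd_sum fun j _ => ?_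
    rcases eq_or_ne j i with rfl | hji
    · rw [if_pos rfl]
      have he : u j * W j c - W j c = (u j - 1) * W j c := by ring
      rw [he]
      exact Dvd.dvd.mul_right (hu1 j) _
    · simp only [if_neg hji, sub_zero]
      exact Dvd.dvd.mul_right (hu0 j i hji.symm) _
  have hv0 : ∀ i, v i 0 = 0 := by
    intro i
    rw [hv]
    simp only
    have h1 : ∀ j ∈ Finset.range (t i + 1),
        (1 - ((Nat.choose 0 (p i ^ j) : ℤ)) ^ (p i - 1)) = 1 := by
      intro j _
      rw [Nat.choose_eq_zero_of_lt (pow_pos (hp i).pos j), Nat.cast_zero,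
        zero_pow (by have := (hp i).two_le; omega), sub_zero]
    rw [Finset.prod_congr rfl h1, Finset.prod_const_one, sub_self]
  have hv1 : ∀ (i : Fin r) (c : ℕ), c ≠ 0 → ¬ (p i ^ (t i + 1) ∣ c) →
      (p i : ℤ) ∣ v i c - 1 := by
    intro i c hc hdvd
    have hvm : v i c - 1
        = -∏ j ∈ Finset.range (t i + 1), (1 - ((c.choose (p i ^ j) : ℤ)) ^ (p i - 1)) := by
      rw [hv]; ring
    rw [hvm, dvd_neg]
    set j0 : ℕ := c.factorization (p i) with hj0
    have hj0le : j0 ≤ t i := by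
      by_contra h
      exact hdvd (dvd_trans (pow_dvd_pow (p i) (by omega)) (Nat.ordProj_dvd c (p i)))
    have hcomp : ¬ p i ∣ c / (p i) ^ j0 := Nat.not_dvd_ordCompl (hp i) hc
    have hsplit : (p i)^j0 * (c / (p i)^j0) = c := Nat.ordProj_mul_ordCompl_eq_self c (p i)
    have hchoose : ¬ p i ∣ c.choose ((p i)^j0) := by
      have h1 := choose_pow_not_dvd (p i) (hp i) (c / (p i)^j0) hcomp j0
      rwa [hsplit] at h1
    have hfac : (p i:ℤ) ∣ (1 - ((c.choose ((p i)^j0) : ℤ)) ^ (p i - 1)) := by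
      have hfermat := euler_one (p i) 1 (hp i) le_rfl ((c.choose ((p i)^j0) : ℤ))
        (fun h => hchoose (Int.natCast_dvd_natCast.mp h))
      rw [pow_one, pow_one, Nat.totient_prime (hp i)] at hfermat
      exact dvd_sub_comm.mp hfermat
    exact dvd_trans hfac (Finset.dvd_prod_of_mem _ (Finset.mem_range.mpr (by omega)))
  have hφpos : ∀ i, 0 < (p i ^ α i).totient :=
    fun i => Nat.totient_pos.mpr (pow_pos (hp i).pos _)
  have hW0 : ∀ i, W i 0 = 0 := by
    intro i; rw [hW]; simp only [hv0 i]; exact zero_pow (hφpos i).ne'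
  have hWor : ∀ i c, ((p i:ℤ)^(α i) ∣ W i c) ∨ ((p i:ℤ)^(α i) ∣ W i c - 1) :=
    fun i c => euler_or (p i) (α i) (hp i) (hα i) (v i c)
  have hW1 : ∀ i c, c ≠ 0 → ¬ (p i ^ (t i + 1) ∣ c) → (p i:ℤ)^(α i) ∣ W i c - 1 := by
    intro i c hc hd
    rw [hW]
    refine euler_one (p i) (α i) (hp i) (hα i) _ ?_
    intro hpd
    have h1 := hv1 i c hc hd
    have h2 : (p i:ℤ) ∣ 1 := by
      have h3 := dvd_sub hpd h1
      simpa using h3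
    have h4 := Int.le_of_dvd one_pos h2
    have h5 : (2:ℤ) ≤ (p i:ℤ) := by exact_mod_cast (hp i).two_le
    omega
  refine ⟨mlin P, mlin_isMultilinear P, ?_, ?_, ?_, ?_⟩
  · -- degree bound
    have hppos : ∀ i, (1:ℕ) ≤ p i := fun i => (hp i).pos
    have hMdeg : ∀ i, (M i).totalDegree ≤ p i ^ (t i + 1) := by
      intro i
      rw [hM]
      simp only
      refine (totalDegree_sub _ _).trans (max_le (by simp [totalDegree_one]) ?_)
      refine (totalDegree_finset_prod _ _).trans ?_
      refine le_trans (Finset.sum_le_sum fun j _ => ?_) (geom_le (p i) (hppos i) (t i + 1))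
      refine (totalDegree_sub _ _).trans (max_le (by simp [totalDegree_one]) ?_)
      refine (totalDegree_pow _ _).trans ?_
      exact Nat.mul_le_mul_left _ (totalDegree_esymm_le n _)
    have hPdeg : P.totalDegree ≤ ∑ i, (p i ^ α i).totient * p i ^ (t i + 1) := by
      rw [hP]
      refine (totalDegree_finset_sum _ _).trans (Finset.sup_le fun i _ => ?_)
      refine (totalDegree_mul _ _).trans ?_
      rw [totalDegree_C, zero_add]
      refine (totalDegree_pow _ _).trans ?_
      refine le_trans (Nat.mul_le_mul_left _ (hMdeg i)) ?_
      exact Finset.single_le_sum (f := fun i => (p i ^ α i).totient * p i ^ (t i + 1))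
        (fun i _ => Nat.zero_le _) (mem_univ i)
    have hrpow1 : (1:ℝ) ≤ (n:ℝ) ^ ((1:ℝ)/r) := by
      have h1 := Real.rpow_le_rpow zero_le_one
        (by exact_mod_cast hn : (1:ℝ) ≤ (n:ℝ)) (by positivity : (0:ℝ) ≤ (1:ℝ)/r)
      rwa [Real.one_rpow] at h1
    have hper : ∀ i, ((p i ^ (t i + 1) : ℕ) : ℝ) ≤ (p i : ℝ) * (n:ℝ) ^ ((1:ℝ)/r) := by
      intro i
      have hpposR : (0:ℝ) < (p i : ℝ) := by exact_mod_cast (hp i).pos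
      rcases eq_or_ne (t i) 0 with h | h
      · rw [h]
        push_cast [pow_one]
        nlinarith [hrpow1, hpposR]
      · have h2 : (((p i ^ t i)^r : ℕ):ℝ) ≤ (n:ℝ) := by exact_mod_cast htmin i h
        have h3 : ((p i ^ t i : ℕ):ℝ) = ((((p i ^ t i)^r : ℕ):ℝ)) ^ ((1:ℝ)/r) := by
          push_cast
          rw [← Real.rpow_natCast ((p i : ℝ)^(t i)) r, ← Real.rpow_mul (by positivity),
            mul_one_div, div_self (ne_of_gt hrR), Real.rpow_one]
        have h1 : ((p i ^ t i : ℕ):ℝ) ≤ (n:ℝ) ^ ((1:ℝ)/r) := by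
          rw [h3]
          exact Real.rpow_le_rpow (by positivity) h2 (by positivity)
        calc ((p i ^ (t i + 1) : ℕ):ℝ) = (p i : ℝ) * ((p i ^ t i : ℕ):ℝ) := by
              push_cast; ring
          _ ≤ (p i:ℝ) * (n:ℝ)^((1:ℝ)/r) := mul_le_mul_of_nonneg_left h1 (le_of_lt hpposR)
    calc ((mlin P).totalDegree : ℝ) ≤ (P.totalDegree : ℝ) := by
          exact_mod_cast mlin_totalDegree_le P
      _ ≤ ((∑ i, (p i ^ α i).totient * p i ^ (t i + 1) : ℕ) : ℝ) := by exact_mod_cast hPdeg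
      _ ≤ ∑ i, ((p i ^ α i).totient : ℝ) * ((p i:ℝ) * (n:ℝ)^((1:ℝ)/r)) := by
          push_cast
          refine Finset.sum_le_sum fun i _ => ?_
          refine mul_le_mul_of_nonneg_left ?_ (by positivity)
          have := hper i
          push_cast at this
          exact this
      _ = (∑ i, ((p i ^ α i).totient * p i : ℝ)) * (n:ℝ)^((1:ℝ)/r) := by
          rw [Finset.sum_mul]
          exact Finset.sum_congr rfl fun i _ => (mul_assoc _ _ _).symm
  · -- value at 0
    have h0 : ∀ a : Fin n, (0 : Fin n → ℤ) a = 0 ∨ (0 : Fin n → ℤ) a = 1 :=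
      fun a => Or.inl rfl
    rw [eval_mlin _ h0, heval _ h0]
    have hk0 : k 0 = 0 := by
      simp [hk]
    rw [hk0, Finset.sum_eq_zero fun i _ => by rw [hW0 i, mul_zero]]
    exact dvd_zero _
  · -- nonzero at nonzero points
    intro x hx hx0
    rw [eval_mlin x hx, heval x hx]
    intro hdvd
    have hk1 : k x ≠ 0 := by
      have hex : ∃ i, x i = 1 := by
        by_contra hno
        push_neg at hno
        apply hx0
        funext a
        rcases hx a with h | h
        · exact h
        · exact absurd h (hno a)
      obtain ⟨a, ha⟩ := hex
      have hmem : a ∈ univ.filter (fun b => x b = 1) :=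
        Finset.mem_filter.mpr ⟨mem_univ _, ha⟩
      have := Finset.card_pos.mpr ⟨a, hmem⟩
      simp only [hk]
      omega
    have hkn : k x ≤ n := by
      simp only [hk]
      calc (univ.filter fun a => x a = 1).card ≤ (univ : Finset (Fin n)).card :=
            Finset.card_filter_le _ _
        _ = n := by simp
    have hex : ∃ i, ¬ (p i ^ (t i + 1) ∣ k x) := by
      by_contra hall
      push_neg at hall
      have hdvdall : ((∏ i, (p i ^ (t i + 1) : ℕ) : ℕ) : ℤ) ∣ (k x : ℤ) := by
        push_cast
        refine Finset.prod_dvd_of_coprime ?_ ?_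
        · intro i _ j hj hij
          have h1 := Nat.isCoprime_iff_coprime.mpr (hcop i j hij (t i + 1) (t j + 1))
          simp only [Function.onFun]
          push_cast at h1
          exact h1
        · intro i _
          have := Int.natCast_dvd_natCast.mpr (hall i)
          push_cast at this
          exact this
      rw [Int.natCast_dvd_natCast] at hdvdall
      have hle := Nat.le_of_dvd (by omega) hdvdall
      omega
    obtain ⟨i, hi⟩ := hex
    have hWi := hW1 i (k x) hk1 hi
    have hm1 : (p i:ℤ)^(α i) ∣ (∑ j, u j * W j (k x)) - 1 := by
      have h1 := dvd_add (key_mod i (k x)) hWi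
      rwa [sub_add_sub_cancel] at h1
    have hqm : ((p i:ℤ)^(α i)) ∣ (m:ℤ) := by
      rw [hm]
      push_cast
      exact Finset.dvd_prod_of_mem _ (mem_univ i)
    have h0 : (p i:ℤ)^(α i) ∣ ∑ j, u j * W j (k x) := hqm.trans hdvd
    have h1 : (p i:ℤ)^(α i) ∣ 1 := by
      have h2 := dvd_sub h0 hm1
      simpa using h2
    have hle := Int.le_of_dvd one_pos h1
    have h2 : (2:ℤ) ≤ (p i:ℤ)^(α i) := by
      calc (2:ℤ) ≤ (p i:ℤ) := by exact_mod_cast (hp i).two_le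
        _ = (p i:ℤ)^1 := (pow_one _).symm
        _ ≤ (p i:ℤ)^(α i) := pow_le_pow_right₀ (by exact_mod_cast (hp i).pos) (hα i)
    omega
  · -- 0 or 1 mod each prime power
    intro x hx i
    rw [eval_mlin x hx, heval x hx]
    rcases hWor i (k x) with h | h
    · left
      have h1 := dvd_add (key_mod i (k x)) h
      rwa [sub_add_cancel] at h1
    · right
      have h1 := dvd_add (key_mod i (k x)) h
      rwa [sub_add_sub_cancel] at h1
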